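/- arXiv:1708.02610 — 2 statements merged into one kernel-verified Lean document; each statement's English description precedes it below -/
import Mathlib

section
/- Let Y be a random variable taking values in a finite non-empty set 𝒴, and let U be a uniform random variable on 𝒴. Then for any subset E of 𝒴 with P(U ∈ E) < 1, one has P(Y ∈ E) ≤ (H(U) − H(Y) + log 2) / log(1 / P(U ∈ E)), where H denotes Shannon entropy. -/
open Finset

/-- Shannon entropy of a probability mass function on a finite type,
with the convention `0 * log (1/0) = 0`. -/
noncomputable def shannonEntropy {Y : Type*} [Fintype Y] (p : Y → ℝ) : ℝ :=
  ∑ y, p y * Real.log (1 / p y)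

lemma gibbs_aux {Y : Type*} [Fintype Y] (p m : Y → ℝ) (hp : ∀ y, 0 ≤ p y)
    (hm : ∀ y, 0 < m y) (hpm : ∑ y, m y ≤ ∑ y, p y) :
    ∑ y, p y * Real.log (1 / p y) ≤ ∑ y, p y * Real.log (1 / m y) := by
  have key : ∀ y, p y * Real.log (1 / p y) - p y * Real.log (1 / m y) ≤ m y - p y := by
    intro y
    rcases eq_or_lt_of_le (hp y) with h | h
    · simp [← h, (hm y).le]
    · have hmp : 0 < m y / p y := div_pos (hm y) h
      have hlog := Real.log_le_sub_one_of_pos hmp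
      have : p y * Real.log (m y / p y) ≤ p y * (m y / p y - 1) :=
        mul_le_mul_of_nonneg_left hlog (hp y)
      calc p y * Real.log (1 / p y) - p y * Real.log (1 / m y)
          = p y * Real.log (m y / p y) := by
            rw [Real.log_div (hm y).ne' h.ne', one_div, one_div, Real.log_inv, Real.log_inv]
            ring
        _ ≤ p y * (m y / p y - 1) := this
        _ = m y - p y := by field_simp
  have h1 : ∑ y, (p y * Real.log (1 / p y) - p y * Real.log (1 / m y))
      ≤ ∑ y, (m y - p y) := Finset.sum_le_sum fun y _ => key y
  rw [Finset.sum_sub_distrib, Finset.sum_sub_distrib] at h1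
  linarith

theorem stmt0 {Y : Type*} [Fintype Y] [Nonempty Y]
    (p : Y → ℝ) (hp : ∀ y, 0 ≤ p y) (hsum : ∑ y, p y = 1)
    (E : Finset Y)
    (hE : (E.card : ℝ) / (Fintype.card Y : ℝ) < 1) :
    ∑ y ∈ E, p y ≤
      (shannonEntropy (fun _ : Y => (1 : ℝ) / (Fintype.card Y : ℝ)) - shannonEntropy p
          + Real.log 2)
        / Real.log (1 / ((E.card : ℝ) / (Fintype.card Y : ℝ))) := by
  classical
  have hN : 0 < Fintype.card Y := Fintype.card_pos
  set N : ℕ := Fintype.card Y with hNdef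
  have hNR : (0:ℝ) < N := by exact_mod_cast hN
  rcases Nat.eq_zero_or_pos E.card with hk0 | hk
  · -- E is empty
    have hE0 : E = ∅ := Finset.card_eq_zero.mp hk0
    simp [hE0]
  have hkR : (0:ℝ) < E.card := by exact_mod_cast hk
  have hkN : (E.card : ℝ) < N := by
    rwa [div_lt_one hNR] at hE
  have hNk : (0:ℝ) < (N:ℝ) - E.card := by linarith
  -- the auxiliary distribution
  set m : Y → ℝ := fun y => if y ∈ E then 1 / (2 * E.card) else 1 / (2 * ((N:ℝ) - E.card))
    with hmdef
  have hmpos : ∀ y, 0 < m y := by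
    intro y
    by_cases hy : y ∈ E
    · simp only [hmdef, if_pos hy]; exact div_pos one_pos (by linarith)
    · simp only [hmdef, if_neg hy]; exact div_pos one_pos (by linarith)
  have hcompl : (Eᶜ : Finset Y).card = N - E.card := by
    simp [Finset.card_compl, hNdef]
  have hcomplR : ((Eᶜ : Finset Y).card : ℝ) = (N:ℝ) - E.card := by
    rw [hcompl, Nat.cast_sub (by exact_mod_cast hkN.le)]
  have hmsum : ∑ y, m y = 1 := by
    rw [← Finset.sum_add_sum_compl E m]
    have e1 : ∀ y ∈ E, m y = 1 / (2 * (E.card : ℝ)) := fun y hy => by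
      simp only [hmdef, if_pos hy]
    have e2 : ∀ y ∈ Eᶜ, m y = 1 / (2 * ((N:ℝ) - E.card)) := fun y hy => by
      simp only [hmdef, if_neg (Finset.mem_compl.mp hy)]
    have h1 : ∑ y ∈ E, m y = E.card * (1 / (2 * (E.card : ℝ))) := by
      rw [Finset.sum_congr rfl e1, Finset.sum_const, nsmul_eq_mul]
    have h2 : ∑ y ∈ Eᶜ, m y = ((N:ℝ) - E.card) * (1 / (2 * ((N:ℝ) - E.card))) := by
      rw [Finset.sum_congr rfl e2, Finset.sum_const, nsmul_eq_mul, hcomplR]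
    rw [h1, h2]
    field_simp
    ring
  have hgibbs := gibbs_aux p m hp hmpos (by rw [hsum, hmsum])
  set P : ℝ := ∑ y ∈ E, p y with hPdef
  have hQ : ∑ y ∈ Eᶜ, p y = 1 - P := by
    have := Finset.sum_add_sum_compl E p
    rw [hsum] at this; linarith
  have hP0 : 0 ≤ P := Finset.sum_nonneg (fun y _ => hp y)
  have hQ0 : 0 ≤ 1 - P := by
    rw [← hQ]; exact Finset.sum_nonneg (fun y _ => hp y)
  -- compute ∑ p log(1/m)
  have hmcalc : ∑ y, p y * Real.log (1 / m y)
      = P * Real.log (2 * E.card) + (1 - P) * Real.log (2 * ((N:ℝ) - E.card)) := by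
    rw [← Finset.sum_add_sum_compl E]
    have h1 : ∑ y ∈ E, p y * Real.log (1 / m y) = P * Real.log (2 * E.card) := by
      rw [hPdef, Finset.sum_mul]
      refine Finset.sum_congr rfl (fun y hy => ?_)
      simp only [hmdef, if_pos hy, one_div_one_div]
    have h2 : ∑ y ∈ Eᶜ, p y * Real.log (1 / m y)
        = (1 - P) * Real.log (2 * ((N:ℝ) - E.card)) := by
      rw [← hQ, Finset.sum_mul]
      refine Finset.sum_congr rfl (fun y hy => ?_)
      simp only [hmdef]
      rw [if_neg (Finset.mem_compl.mp hy), one_div_one_div]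
    rw [h1, h2]
  -- entropy of uniform = log N
  have huni : shannonEntropy (fun _ : Y => (1 : ℝ) / (N : ℝ)) = Real.log N := by
    unfold shannonEntropy
    rw [Finset.sum_const, nsmul_eq_mul]
    rw [one_div_one_div]
    field_simp
    simp [Finset.card_univ, hNdef]
  -- key entropy bound
  have hHub : shannonEntropy p ≤ Real.log 2 + P * Real.log E.card
      + (1 - P) * Real.log ((N:ℝ) - E.card) := by
    unfold shannonEntropy
    calc ∑ y, p y * Real.log (1 / p y) ≤ ∑ y, p y * Real.log (1 / m y) := hgibbs
      _ = P * Real.log (2 * E.card) + (1 - P) * Real.log (2 * ((N:ℝ) - E.card)) := hmcalc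
      _ = Real.log 2 + P * Real.log E.card + (1 - P) * Real.log ((N:ℝ) - E.card) := by
          rw [Real.log_mul two_ne_zero hkR.ne', Real.log_mul two_ne_zero hNk.ne']
          ring
  have hlogmono : Real.log ((N:ℝ) - E.card) ≤ Real.log N :=
    Real.log_le_log hNk (by linarith)
  have hdenom : Real.log (1 / ((E.card : ℝ) / (N:ℝ))) = Real.log N - Real.log E.card := by
    rw [one_div, Real.log_inv, Real.log_div hkR.ne' hNR.ne']
    ring
  have hdpos : 0 < Real.log N - Real.log E.card := by
    have := Real.log_lt_log hkR hkN
    linarith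
  rw [huni, hdenom, le_div_iff₀ hdpos]
  have step : (1 - P) * Real.log ((N:ℝ) - E.card) ≤ (1 - P) * Real.log N :=
    mul_le_mul_of_nonneg_left hlogmono hQ0
  nlinarith [hHub, step]
end

section
/- Suppose f: ℤ → 𝔻 is a bounded function such that for every ε > 0 there exists a periodic function f_ε: ℤ → ℂ with sup_a |f(a) − f_ε(a)| ≤ ε, and suppose that for every Dirichlet character χ mod any modulus one has lim_{x→∞} (1/x) Σ_{n≤x} f(an) conj(χ(n)) = 0 for all positive integers a. Then f(a) = 0 for all a. -/
open Filter Finset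

lemma aux_reindex (q N : ℕ) (hq : 0 < q) (g : ℕ → ℂ) :
    ∑ n ∈ (Finset.Icc 1 (N*q)).filter (fun n => ((n : ℕ) : ZMod q) = 1), g n
      = ∑ k ∈ Finset.range N, g (k*q+1) := by
  haveI : NeZero q := ⟨hq.ne'⟩
  refine (Finset.sum_nbij' (fun k => k*q+1) (fun n => (n-1)/q) ?_ ?_ ?_ ?_ ?_).symm
  · intro k hk
    simp only [Finset.mem_range] at hk
    simp only [Finset.mem_filter, Finset.mem_Icc]
    refine ⟨⟨by omega, ?_⟩, ?_⟩
    · have : (k+1) * q ≤ N * q := Nat.mul_le_mul_right q (by omega)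
      nlinarith
    · push_cast
      simp [ZMod.natCast_self]
  · intro n hn
    simp only [Finset.mem_filter, Finset.mem_Icc] at hn
    obtain ⟨⟨h1, h2⟩, h3⟩ := hn
    have hmod : n ≡ 1 [MOD q] := (ZMod.natCast_eq_natCast_iff n 1 q).mp (by simpa using h3)
    have hdvd : q ∣ n - 1 := (Nat.modEq_iff_dvd' h1).mp hmod.symm
    simp only [Finset.mem_range]
    rw [Nat.div_lt_iff_lt_mul hq]
    omega
  · intro k hk
    simp [Nat.mul_div_cancel _ hq]
  · intro n hn
    simp only [Finset.mem_filter, Finset.mem_Icc] at hn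
    obtain ⟨⟨h1, h2⟩, h3⟩ := hn
    have hmod : n ≡ 1 [MOD q] := (ZMod.natCast_eq_natCast_iff n 1 q).mp (by simpa using h3)
    have hdvd : q ∣ n - 1 := (Nat.modEq_iff_dvd' h1).mp hmod.symm
    have := Nat.div_mul_cancel hdvd
    show (n-1)/q*q+1 = n
    omega
  · intro k hk; rfl

theorem stmt11 (f : ℤ → ℂ) (hbd : ∀ a : ℤ, ‖f a‖ ≤ 1)
    (happrox : ∀ ε > (0 : ℝ), ∃ (q : ℕ) (fε : ℤ → ℂ), 0 < q ∧
      (∀ a : ℤ, fε (a + q) = fε a) ∧ ∀ a : ℤ, ‖f a - fε a‖ ≤ ε)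
    (horth : ∀ (q : ℕ), 0 < q → ∀ χ : DirichletCharacter ℂ q, ∀ a : ℕ, 0 < a →
      Filter.Tendsto
        (fun x : ℕ => (1 / (x : ℂ)) * ∑ n ∈ Finset.Icc 1 x,
          f ((a : ℤ) * n) * (starRingEnd ℂ) (χ ((n : ℕ) : ZMod q)))
        Filter.atTop (nhds 0)) :
    ∀ a : ℤ, f a = 0 := by
  -- Step 1: f vanishes at positive integers
  have key : ∀ a : ℕ, 0 < a → f a = 0 := by
    intro a ha
    have habs : ∀ ε > (0:ℝ), ‖f a‖ ≤ 2 * ε := by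
      intro ε hε
      obtain ⟨q, fε, hq, hper, hclose⟩ := happrox ε hε
      haveI : NeZero q := ⟨hq.ne'⟩
      -- periodicity for multiples of q
      have hper' : ∀ (m : ℤ) (t : ℕ), fε (m + t * q) = fε m := by
        intro m t
        induction t with
        | zero => simp
        | succ t ih =>
          have h1 : m + ((t:ℕ)+1 : ℕ) * (q:ℤ) = (m + t * q) + q := by push_cast; ring
          rw [h1, hper, ih]
      -- the averaged sum over the progression 1 mod q
      set S : ℕ → ℂ := fun x => (1/(x:ℂ)) *
        ∑ n ∈ (Finset.Icc 1 x).filter (fun n => ((n : ℕ) : ZMod q) = 1), f ((a:ℤ)*n) with hSdef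
      have htot : (q.totient : ℂ) ≠ 0 := by
        exact_mod_cast Nat.cast_ne_zero.mpr (Nat.totient_pos.mpr hq).ne'
      have hS : Tendsto S atTop (nhds 0) := by
        have hsum : Tendsto (fun x : ℕ => ∑ χ : DirichletCharacter ℂ q,
            (1 / (x : ℂ)) * ∑ n ∈ Finset.Icc 1 x,
              f ((a : ℤ) * n) * (starRingEnd ℂ) (χ ((n : ℕ) : ZMod q)))
            atTop (nhds 0) := by
          have := tendsto_finset_sum (Finset.univ : Finset (DirichletCharacter ℂ q))
            (fun χ _ => horth q hq χ a ha)
          simpa using this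
        have := hsum.const_mul (1/(q.totient : ℂ))
        rw [mul_zero] at this
        refine this.congr (fun x => ?_)
        rw [hSdef]
        simp only
        rw [← Finset.mul_sum, Finset.sum_comm]
        have hinner : ∀ n : ℕ, (∑ χ : DirichletCharacter ℂ q,
            f ((a:ℤ)*n) * (starRingEnd ℂ) (χ ((n:ℕ) : ZMod q)))
            = f ((a:ℤ)*n) * (if ((n:ℕ) : ZMod q) = 1 then (q.totient : ℂ) else 0) := by
          intro n
          rw [← Finset.mul_sum, ← map_sum, DirichletCharacter.sum_characters_eq]
          congr 1
          split_ifs <;> simp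
        calc (1/(q.totient:ℂ)) * ((1/(x:ℂ)) * ∑ n ∈ Finset.Icc 1 x,
              ∑ χ : DirichletCharacter ℂ q, f ((a:ℤ)*n) * (starRingEnd ℂ) (χ ((n:ℕ) : ZMod q)))
            = (1/(x:ℂ)) * ((1/(q.totient:ℂ)) * ∑ n ∈ Finset.Icc 1 x,
              f ((a:ℤ)*n) * (if ((n:ℕ) : ZMod q) = 1 then (q.totient : ℂ) else 0)) := by
              simp_rw [hinner]; ring
          _ = (1/(x:ℂ)) * ∑ n ∈ (Finset.Icc 1 x).filter (fun n => ((n : ℕ) : ZMod q) = 1),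
              f ((a:ℤ)*n) := by
              congr 1
              rw [Finset.sum_filter, Finset.mul_sum]
              refine Finset.sum_congr rfl fun n _ => ?_
              split_ifs with h
              · field_simp
              · simp
      -- along x = N*q
      have hmul : Tendsto (fun N : ℕ => N * q) atTop atTop :=
        Filter.tendsto_atTop_atTop.mpr fun b =>
          ⟨b, fun n hn => le_trans hn (Nat.le_mul_of_pos_right n hq)⟩
      have hSq : Tendsto (fun N => ‖S (N*q)‖) atTop (nhds 0) := by
        have := (hS.comp hmul).norm
        simpa [Function.comp] using this
      have hlim : Tendsto (fun N => (q:ℝ) * ‖S (N*q)‖ + ε) atTop (nhds ε) := by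
        have := (hSq.const_mul (q:ℝ)).add_const ε
        simpa using this
      have hfεa : ‖fε a‖ ≤ ε := by
        refine ge_of_tendsto hlim ?_
        filter_upwards [Filter.eventually_ge_atTop 1] with N hN
        have hre : S (N*q) = (1/(((N*q : ℕ)):ℂ)) *
            ∑ k ∈ Finset.range N, f ((a:ℤ)*((k*q+1 : ℕ):ℤ)) := by
          rw [hSdef]
          simp only
          rw [aux_reindex q N hq (fun n : ℕ => f ((a:ℤ)*(n:ℤ)))]
        set A := ∑ k ∈ Finset.range N, f ((a:ℤ)*((k*q+1 : ℕ):ℤ)) with hA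
        have hterm : ∀ k : ℕ, fε ((a:ℤ)*((k*q+1 : ℕ):ℤ)) = fε a := by
          intro k
          have h2 : ((a:ℤ))*((k*q+1 : ℕ):ℤ) = (a:ℤ) + ((a*k : ℕ):ℤ) * q := by
            push_cast; ring
          rw [h2, hper']
        have hAe : ‖A - N * fε a‖ ≤ N * ε := by
          have h3 : A - N * fε a
              = ∑ k ∈ Finset.range N, (f ((a:ℤ)*((k*q+1:ℕ):ℤ)) - fε ((a:ℤ)*((k*q+1:ℕ):ℤ))) := by
            rw [Finset.sum_sub_distrib, hA]
            congr 1
            rw [Finset.sum_congr rfl (fun k _ => hterm k), Finset.sum_const,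
              Finset.card_range, nsmul_eq_mul]
          rw [h3]
          calc ‖∑ k ∈ Finset.range N,
                (f ((a:ℤ)*((k*q+1:ℕ):ℤ)) - fε ((a:ℤ)*((k*q+1:ℕ):ℤ)))‖
              ≤ ∑ k ∈ Finset.range N,
                ‖f ((a:ℤ)*((k*q+1:ℕ):ℤ)) - fε ((a:ℤ)*((k*q+1:ℕ):ℤ))‖ := by
                simpa using
                  norm_sum_le (Finset.range N)
                    (fun k => f ((a:ℤ)*((k*q+1:ℕ):ℤ)) - fε ((a:ℤ)*((k*q+1:ℕ):ℤ)))
            _ ≤ ∑ _k ∈ Finset.range N, ε := Finset.sum_le_sum (fun k _ => hclose _)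
            _ = N * ε := by simp [mul_comm]
        have hNq : (((N*q:ℕ)):ℂ) ≠ 0 := by
          exact Nat.cast_ne_zero.mpr (Nat.mul_ne_zero (by omega) hq.ne')
        have hAS : A = ((N*q : ℕ):ℂ) * S (N*q) := by
          rw [hre, ← mul_assoc, mul_one_div, div_self hNq, one_mul]
        -- N * |fε a| ≤ N*q*|S(N*q)| + N*ε
        have hNfe : (N:ℝ) * ‖fε a‖
            ≤ (N:ℝ) * ((q:ℝ) * ‖S (N*q)‖ + ε) := by
          have h4 : (N:ℂ) * fε a = A - (A - N * fε a) := by ring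
          have h5 : ‖(N:ℂ) * fε a‖ ≤ ‖A‖ + N * ε := by
            rw [h4]
            calc ‖A - (A - N * fε a)‖
                ≤ ‖A‖ + ‖A - N * fε a‖ := by
                  simpa using norm_sub_le A (A - (N:ℂ) * fε a)
              _ ≤ ‖A‖ + N * ε := by linarith
          have h6 : ‖(N:ℂ) * fε a‖ = (N:ℝ) * ‖fε a‖ := by
            rw [norm_mul, Complex.norm_natCast]
          have h7 : ‖A‖ = ((N:ℝ)*(q:ℝ)) * ‖S (N*q)‖ := by
            rw [hAS, norm_mul, Complex.norm_natCast, Nat.cast_mul]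
          rw [h6] at h5
          rw [h7] at h5
          nlinarith
        have hNpos : (0:ℝ) < N := by exact_mod_cast hN
        exact le_of_mul_le_mul_left (by linarith) hNpos
      have h8 : ‖f a‖ ≤ ‖f a - fε a‖ + ‖fε a‖ := by
        simpa using norm_add_le (f (a:ℤ) - fε (a:ℤ)) (fε (a:ℤ))
      have := hclose (a:ℤ)
      linarith
    by_contra hne
    have hpos : 0 < ‖f a‖ := norm_pos_iff.mpr hne
    have := habs (‖f a‖/4) (by linarith)
    linarith
  -- Step 2: general integers
  intro a
  have habs : ∀ ε > (0:ℝ), ‖f a‖ ≤ 2 * ε := by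
    intro ε hε
    obtain ⟨q, fε, hq, hper, hclose⟩ := happrox ε hε
    have hper' : ∀ (m : ℤ) (t : ℕ), fε (m + t * q) = fε m := by
      intro m t
      induction t with
      | zero => simp
      | succ t ih =>
        have h1 : m + ((t:ℕ)+1 : ℕ) * (q:ℤ) = (m + t * q) + q := by push_cast; ring
        rw [h1, hper, ih]
    set t : ℕ := a.natAbs + 1 with ht
    have h1 : (t:ℤ) ≤ (t:ℤ) * q :=
      le_mul_of_one_le_right (by positivity) (by exact_mod_cast hq)
    have htq : (1:ℤ) ≤ a + t * q := by
      have ht' : (t:ℤ) = a.natAbs + 1 := by rw [ht]; push_cast; ring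
      omega
    have hb0 : f (a + t*q) = 0 := by
      have h2 := key (a + t*q).toNat (by omega)
      rwa [Int.toNat_of_nonneg (by omega)] at h2
    have hfe : fε (a + t*q) = fε a := hper' a t
    have h3 : f a = (f a - fε a) - (f (a+t*q) - fε (a+t*q)) := by
      rw [hb0, hfe]; ring
    have h4 : ‖f a‖ ≤ ‖f a - fε a‖
        + ‖f (a+t*q) - fε (a+t*q)‖ := by
      calc ‖f a‖
          = ‖(f a - fε a) - (f (a+t*q) - fε (a+t*q))‖ := by rw [← h3]
        _ ≤ _ := by
            simpa using
              norm_sub_le (f a - fε a) (f (a+t*q) - fε (a+t*q))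
    have := hclose a
    have := hclose (a+t*q)
    linarith
  by_contra hne
  have hpos : 0 < ‖f a‖ := norm_pos_iff.mpr hne
  have := habs (‖f a‖/4) (by linarith)
  linarith
end
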